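/- Let G be a countably infinite residually finite group that is virtually product-like, i.e., G has a finite-index subgroup G₀ which contains two nontrivial normal subgroups A, B of G₀ with A ∩ B = {1}. Then G admits no faithful 2-transitive action on any set. -/

import Mathlib

namespace NoFaith2T

variable {G : Type*} [Group G]

/-- The conjugate subgroup `g P g⁻¹`, via `comap` of conjugation by `g⁻¹`. -/
def cnj (g : G) (P : Subgroup G) : Subgroup G :=
  P.comap (MulAut.conj g⁻¹).toMonoidHom

lemma mem_cnj {g x : G} {P : Subgroup G} : x ∈ cnj g P ↔ g⁻¹ * x * g ∈ P := by
  simp [cnj, Subgroup.mem_comap, MulAut.conj_apply]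

lemma conj_mem_cnj {g p : G} {P : Subgroup G} (hp : p ∈ P) : g * p * g⁻¹ ∈ cnj g P := by
  rw [mem_cnj]
  have : g⁻¹ * (g * p * g⁻¹) * g = p := by group
  rwa [this]

lemma cnj_one (P : Subgroup G) : cnj 1 P = P := by
  ext x; simp [mem_cnj]

lemma cnj_cnj (g h : G) (P : Subgroup G) : cnj g (cnj h P) = cnj (g * h) P := by
  ext x; rw [mem_cnj, mem_cnj, mem_cnj]
  have : h⁻¹ * (g⁻¹ * x * g) * h = (g*h)⁻¹ * x * (g*h) := by group
  rw [this]

lemma cnj_mono {P Q : Subgroup G} (g : G) (h : P ≤ Q) : cnj g P ≤ cnj g Q :=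
  Subgroup.comap_mono h

lemma cnj_inf (g : G) (P Q : Subgroup G) : cnj g (P ⊓ Q) = cnj g P ⊓ cnj g Q :=
  Subgroup.comap_inf _ _ _

lemma cnj_top (g : G) : cnj g (⊤ : Subgroup G) = ⊤ := by
  ext x; simp [mem_cnj]

lemma cnj_bot (g : G) : cnj g (⊥ : Subgroup G) = ⊥ := by
  ext x
  rw [mem_cnj, Subgroup.mem_bot, Subgroup.mem_bot]
  constructor
  · intro h
    have : x = g * (g⁻¹ * x * g) * g⁻¹ := by group
    rw [this, h]; group
  · intro h; rw [h]; group

lemma cnj_eq_bot_iff {g : G} {P : Subgroup G} : cnj g P = ⊥ ↔ P = ⊥ := by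
  constructor
  · intro h
    have : cnj g⁻¹ (cnj g P) = cnj g⁻¹ (⊥ : Subgroup G) := by rw [h]
    rwa [cnj_cnj, inv_mul_cancel, cnj_one, cnj_bot] at this
  · intro h; rw [h, cnj_bot]

lemma cnj_eq_of_normal {P : Subgroup G} (hP : P.Normal) (g : G) : cnj g P = P := by
  ext x
  rw [mem_cnj]
  constructor
  · intro h
    have h1 := hP.conj_mem _ h g
    have h2 : g * (g⁻¹ * x * g) * g⁻¹ = x := by group
    rwa [h2] at h1
  · intro h
    have h1 := hP.conj_mem x h g⁻¹
    rwa [show g⁻¹ * x * g⁻¹⁻¹ = g⁻¹ * x * g by rw [inv_inv]] at h1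

lemma cnj_finsetInf (g : G) (s : Finset (Subgroup G)) :
    cnj g (s.inf id) = s.inf (cnj g) := by
  classical
  induction s using Finset.induction_on with
  | empty => simpa using cnj_top g
  | insert a t h ih =>
      rw [Finset.inf_insert, Finset.inf_insert, cnj_inf, ih]; rfl


section Action

variable {Ω : Type*} (ρ : G →* Equiv.Perm Ω)

/-- Semiregular (free) action of a subgroup. -/
def Sr (K : Subgroup G) : Prop := ∀ k ∈ K, k ≠ 1 → ∀ ω : Ω, ρ k ω ≠ ω

variable {ρ}

lemma exists_moved {x : G} (hinj : Function.Injective ρ) (hx : x ≠ 1) :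
    ∃ p : Ω, ρ x p ≠ p := by
  by_contra h
  push_neg at h
  apply hx
  apply hinj
  rw [map_one]
  exact Equiv.ext h

/-- Any nontrivial normal subgroup of a 2-transitive group is transitive. -/
lemma trans_of_normal (hinj : Function.Injective ρ)
    (h2 : ∀ a b c d : Ω, a ≠ b → c ≠ d → ∃ g : G, ρ g a = c ∧ ρ g b = d)
    {W : Subgroup G} (hW : W.Normal) (hbot : W ≠ ⊥) (u v : Ω) :
    ∃ w ∈ W, ρ w u = v := by
  rcases eq_or_ne u v with rfl | huv
  · exact ⟨1, W.one_mem, by simp⟩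
  · obtain ⟨w₀, hw₀W, hw₀⟩ := (Subgroup.bot_or_exists_ne_one W).resolve_left hbot
    obtain ⟨p, hp⟩ := exists_moved hinj hw₀
    obtain ⟨g, hg1, hg2⟩ := h2 p (ρ w₀ p) u v (Ne.symm hp) huv
    refine ⟨g * w₀ * g⁻¹, hW.conj_mem w₀ hw₀W g, ?_⟩
    have h3 : ρ g⁻¹ u = p := by
      rw [← hg1, map_inv]; simp
    rw [map_mul, map_mul]
    simp only [Equiv.Perm.coe_mul, Function.comp_apply]
    rw [h3, hg2]

/-- RF kill: a semiregular nontrivial normal subgroup cannot exist. -/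
lemma semireg_normal_eq_bot [Infinite Ω]
    (hrf : ∀ g : G, g ≠ 1 →
      ∃ (H : Type) (_ : Group H) (_ : Finite H) (φ : G →* H), φ g ≠ 1)
    (hinj : Function.Injective ρ)
    (h2 : ∀ a b c d : Ω, a ≠ b → c ≠ d → ∃ g : G, ρ g a = c ∧ ρ g b = d)
    {W : Subgroup G} (hW : W.Normal) (hsr : Sr ρ W) : W = ⊥ := by
  by_contra hbot
  obtain ⟨w, hwW, hw⟩ := (Subgroup.bot_or_exists_ne_one W).resolve_left hbot
  obtain ⟨H, _, _, φ, hφ⟩ := hrf w hw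
  obtain ⟨ω⟩ : Nonempty Ω := inferInstance
  set K : Subgroup G := W ⊓ φ.ker with hK
  have hKnormal : K.Normal := by
    constructor
    intro x hx g
    exact ⟨hW.conj_mem x hx.1 g, (MonoidHom.normal_ker φ).conj_mem x hx.2 g⟩
  rcases eq_or_ne K ⊥ with hKbot | hKbot
  · -- W embeds into finite H, so W is finite; but W is transitive on infinite Ω
    have hWfin : Finite W := by
      have : Function.Injective (fun x : W => φ (x : G)) := by
        intro a b hab
        have : (a : G) * (b : G)⁻¹ ∈ K := by
          rw [hK, Subgroup.mem_inf]
          refine ⟨W.mul_mem a.2 (W.inv_mem b.2), ?_⟩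
          rw [MonoidHom.mem_ker, map_mul, map_inv]
          have hab' : φ (↑a) = φ (↑b) := hab
          rw [hab']; group
        rw [hKbot, Subgroup.mem_bot, mul_inv_eq_one] at this
        exact Subtype.ext this
      exact Finite.of_injective _ this
    have hsurj : Function.Surjective (fun x : W => ρ (x : G) ω) := by
      intro v
      obtain ⟨w', hw'W, hw'⟩ := trans_of_normal hinj h2 hW hbot ω v
      exact ⟨⟨w', hw'W⟩, hw'⟩
    have : Finite Ω := Finite.of_surjective _ hsurj
    exact not_finite Ω
  · obtain ⟨k, hkK, hkρ⟩ := trans_of_normal hinj h2 hKnormal hKbot ω (ρ w ω)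
    have hfix : ρ (w⁻¹ * k) ω = ω := by
      rw [map_mul]
      simp only [Equiv.Perm.coe_mul, Function.comp_apply]
      rw [hkρ, map_inv]
      simp
    have : w⁻¹ * k = 1 := by
      by_contra hne
      exact hsr (w⁻¹ * k) (W.mul_mem (W.inv_mem hwW) hkK.1) hne ω hfix
    have : w = k := by
      rw [inv_mul_eq_one] at this; exact this
    exact hφ (this ▸ hkK.2)

lemma apply_mul (g h : G) (x : Ω) : ρ (g * h) x = ρ g (ρ h x) := by
  rw [map_mul]; rfl

lemma normal_inf {P Q : Subgroup G} (hP : P.Normal) (hQ : Q.Normal) : (P ⊓ Q).Normal :=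
  ⟨fun x hx g => ⟨hP.conj_mem x hx.1 g, hQ.conj_mem x hx.2 g⟩⟩

lemma centralizer_normal {V : Subgroup G} (hV : V.Normal) :
    (Subgroup.centralizer (V : Set G)).Normal := by
  constructor
  intro c hc g
  rw [Subgroup.mem_centralizer_iff] at hc ⊢
  intro n hn
  have h1 : g⁻¹ * n * g ∈ V := by
    have := hV.conj_mem n hn g⁻¹
    simpa using this
  have h2 := hc (g⁻¹ * n * g) h1
  calc n * (g * c * g⁻¹) = g * ((g⁻¹ * n * g) * c) * g⁻¹ := by group
    _ = g * (c * (g⁻¹ * n * g)) * g⁻¹ := by rw [h2]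
    _ = g * c * g⁻¹ * n := by group

lemma centralizer_eq_bot [Infinite Ω]
    (hrf : ∀ g : G, g ≠ 1 →
      ∃ (H : Type) (_ : Group H) (_ : Finite H) (φ : G →* H), φ g ≠ 1)
    (hinj : Function.Injective ρ)
    (h2 : ∀ a b c d : Ω, a ≠ b → c ≠ d → ∃ g : G, ρ g a = c ∧ ρ g b = d)
    {V : Subgroup G} (hV : V.Normal) (hbot : V ≠ ⊥) :
    Subgroup.centralizer (V : Set G) = ⊥ := by
  apply semireg_normal_eq_bot hrf hinj h2 (centralizer_normal hV)
  intro c hc hc1 ω hfix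
  apply hc1
  apply hinj
  rw [map_one]
  apply Equiv.ext
  intro v
  obtain ⟨n, hnV, hnρ⟩ := trans_of_normal hinj h2 hV hbot ω v
  have hcomm : c * n = n * c := (Subgroup.mem_centralizer_iff.1 hc n hnV).symm
  calc ρ c v = ρ c (ρ n ω) := by rw [hnρ]
    _ = ρ (c * n) ω := (apply_mul c n ω).symm
    _ = ρ (n * c) ω := by rw [hcomm]
    _ = ρ n (ρ c ω) := apply_mul n c ω
    _ = (1 : Equiv.Perm Ω) v := by rw [hfix, hnρ]; rfl

/-- The stabilizer of a point, as a subgroup. -/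
def stab (ρ : G →* Equiv.Perm Ω) (ω : Ω) : Subgroup G where
  carrier := {g | ρ g ω = ω}
  one_mem' := by simp
  mul_mem' := by
    intro a b ha hb
    simp only [Set.mem_setOf_eq] at *
    rw [apply_mul, hb, ha]
  inv_mem' := by
    intro a ha
    simp only [Set.mem_setOf_eq] at *
    have : ρ a⁻¹ (ρ a ω) = ω := by
      rw [← apply_mul, inv_mul_cancel, map_one]; rfl
    rwa [ha] at this

lemma mem_stab {ω : Ω} {g : G} : g ∈ stab ρ ω ↔ ρ g ω = ω := Iff.rfl

lemma bot_not_finiteIndex [Infinite G] : ¬ (⊥ : Subgroup G).FiniteIndex := by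
  intro h
  have := h.index_ne_zero
  rw [Subgroup.index_bot] at this
  exact this Nat.card_eq_zero_of_infinite

/-- Lemma S: a nontrivial semiregular subgroup whose normalizer has finite index
cannot exist. -/
lemma lemS [Infinite G] [Infinite Ω]
    (hrf : ∀ g : G, g ≠ 1 →
      ∃ (H : Type) (_ : Group H) (_ : Finite H) (φ : G →* H), φ g ≠ 1)
    (hinj : Function.Injective ρ)
    (h2 : ∀ a b c d : Ω, a ≠ b → c ≠ d → ∃ g : G, ρ g a = c ∧ ρ g b = d)
    {K : Subgroup G} (hKbot : K ≠ ⊥) (hfin : (Subgroup.normalizer (K : Set G)).FiniteIndex)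
    (hsr : Sr ρ K) : False := by
  classical
  haveI := hfin
  obtain ⟨ω⟩ : Nonempty Ω := inferInstance
  obtain ⟨k₀, hk₀K, hk₀⟩ := (Subgroup.bot_or_exists_ne_one K).resolve_left hKbot
  set v₀ := ρ k₀ ω with hv₀def
  have hv₀ : v₀ ≠ ω := hsr k₀ hk₀K hk₀ ω
  set St := stab ρ ω with hSt
  haveI : Finite (↥St ⧸ (Subgroup.normalizer (K : Set G)).subgroupOf St) := inferInstance
  set Q := ↥St ⧸ (Subgroup.normalizer (K : Set G)).subgroupOf St with hQ
  set wfun : Q → Ω := fun c => ρ (((Quotient.out c : ↥St) : G))⁻¹ v₀ with hwfun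
  -- covering of Ω ∖ {ω} by images of the finitely many base points
  have hcov : ∀ v : Ω, v ≠ ω → ∃ σ : G, σ ∈ (Subgroup.normalizer (K : Set G)) ∧ ρ σ ω = ω ∧
      ∃ c : Q, ρ σ (wfun c) = v := by
    intro v hv
    obtain ⟨g, hg1, hg2⟩ := h2 ω v₀ ω v (Ne.symm hv₀) (Ne.symm hv)
    set gs : ↥St := ⟨g, hg1⟩ with hgdef
    set c : Q := QuotientGroup.mk (gs⁻¹) with hc
    set b : ↥St := Quotient.out c with hb
    have hmk : (QuotientGroup.mk (gs⁻¹) : Q) = (QuotientGroup.mk b : Q) := by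
      rw [hb, ← hc, QuotientGroup.out_eq']
    have hσ' : gs * b ∈ (Subgroup.normalizer (K : Set G)).subgroupOf St := by
      have h3 := QuotientGroup.eq.1 hmk
      simpa using h3
    refine ⟨(gs : G) * (b : G), ?_, ?_, c, ?_⟩
    · have := Subgroup.mem_subgroupOf.1 hσ'
      simpa using this
    · show (gs : G) * (b : G) ∈ St
      exact_mod_cast (gs * b).2
    · have hstep : ρ ((b : G)) (wfun c) = v₀ := by
        rw [hwfun]
        simp only [← hb]
        rw [← apply_mul, mul_inv_cancel, map_one]
        rfl
      rw [apply_mul, hstep, hg2]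
  -- the finite set of elements of K sent by conjugation to base points
  set F : Set G := {k | k ∈ K ∧ ∃ c : Q, ρ k ω = wfun c} with hF
  have hFfin : F.Finite := by
    rw [← Set.finite_coe_iff]
    haveI : Finite ↥(Set.range wfun) := (Set.finite_range wfun).to_subtype
    refine Finite.of_injective (fun k : F => (⟨ρ (k : G) ω,
      by obtain ⟨c, hc⟩ := k.2.2; exact ⟨c, hc.symm⟩⟩ : ↥(Set.range wfun))) ?_
    · intro a b hab
      have h3 : ρ (a : G) ω = ρ (b : G) ω := congrArg Subtype.val hab
      have h4 : ρ ((b : G)⁻¹ * (a : G)) ω = ω := by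
        rw [apply_mul, h3, ← apply_mul, inv_mul_cancel, map_one]; rfl
      have h5 : (b : G)⁻¹ * (a : G) ∈ K := K.mul_mem (K.inv_mem b.2.1) a.2.1
      have h6 : (b : G)⁻¹ * (a : G) = 1 := by
        by_contra hne
        exact hsr _ h5 hne ω h4
      ext
      exact (inv_mul_eq_one.1 h6).symm
  -- residual finiteness: choose kernels avoiding each element of F
  have hκ : ∀ f : G, ∃ P : Subgroup G, P.Normal ∧ P.FiniteIndex ∧ (f ≠ 1 → f ∉ P) := by
    intro f
    by_cases hf : f = 1
    · exact ⟨⊤, inferInstance, inferInstance, fun h => absurd hf h⟩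
    · obtain ⟨H, _, _, φ, hφ⟩ := hrf f hf
      exact ⟨φ.ker, MonoidHom.normal_ker φ, inferInstance,
        fun _ hk => hφ (by rwa [MonoidHom.mem_ker] at hk)⟩
  choose κ hκ₁ hκ₂ hκ₃ using hκ
  set N₃ : Subgroup G := (hFfin.toFinset.inf κ) ⊓ (Subgroup.normalizer (K : Set G)).normalCore with hN₃
  have hinfN : ∀ s : Finset G, (s.inf κ).Normal := by
    intro s
    induction s using Finset.induction_on with
    | empty => rw [Finset.inf_empty]; infer_instance
    | insert a t h ih =>
        rw [Finset.inf_insert]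
        exact normal_inf (hκ₁ a) ih
  have hN₃n : N₃.Normal := normal_inf (hinfN _) (Subgroup.normalCore_normal _)
  have hN₃f : N₃.FiniteIndex := by
    have h1 : (hFfin.toFinset.inf κ).FiniteIndex := by
      rw [Finset.inf_eq_iInf]
      exact Subgroup.finiteIndex_iInf' κ (fun i _ => hκ₂ i)
    haveI := h1
    infer_instance
  have hN₃bot : N₃ ≠ ⊥ := by
    intro h
    exact bot_not_finiteIndex (h ▸ hN₃f)
  -- K meets N₃ trivially
  have hdisj : K ⊓ N₃ = ⊥ := by
    rw [Subgroup.eq_bot_iff_forall]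
    intro p hp
    by_contra hp1
    have hpK : p ∈ K := (Subgroup.mem_inf.1 hp).1
    have hpN : p ∈ N₃ := (Subgroup.mem_inf.1 hp).2
    have hv : ρ p ω ≠ ω := hsr p hpK hp1 ω
    obtain ⟨σ, hσG₂, hσω, c, hσc⟩ := hcov (ρ p ω) hv
    set k₁ := σ⁻¹ * p * σ with hk₁
    have hk₁K : k₁ ∈ K := by
      have h5 : σ⁻¹ ∈ (Subgroup.normalizer (K : Set G)) := (Subgroup.normalizer (K : Set G)).inv_mem hσG₂
      have h6 := (Subgroup.mem_normalizer_iff.1 h5 p).1 hpK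
      rwa [inv_inv] at h6
    have hk₁ω : ρ k₁ ω = wfun c := by
      rw [hk₁, apply_mul, hσω, apply_mul, ← hσc, ← apply_mul, inv_mul_cancel, map_one]
      rfl
    have hk₁F : k₁ ∈ F := ⟨hk₁K, c, hk₁ω⟩
    have hk₁ne : k₁ ≠ 1 := by
      intro h
      apply hp1
      have : p = σ * k₁ * σ⁻¹ := by rw [hk₁]; group
      rw [this, h]; group
    have hple : p ∈ κ k₁ := by
      have hle : hFfin.toFinset.inf κ ≤ κ k₁ :=
        Finset.inf_le (hFfin.mem_toFinset.2 hk₁F)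
      exact hle ((Subgroup.mem_inf.1 hpN).1)
    have : k₁ ∈ κ k₁ := by
      have h7 := (hκ₁ k₁).conj_mem p hple σ⁻¹
      rwa [inv_inv] at h7
    exact hκ₃ k₁ hk₁ne this
  -- hence K centralizes N₃
  have hcomm : ∀ k ∈ K, ∀ n ∈ N₃, k * n = n * k := by
    intro k hk n hn
    have hnn : n ∈ (Subgroup.normalizer (K : Set G)) := Subgroup.normalCore_le _ ((Subgroup.mem_inf.1 hn).2)
    have hc1 : k * n * k⁻¹ * n⁻¹ ∈ K := by
      have h7 := (Subgroup.mem_normalizer_iff.1 hnn k⁻¹).1 (K.inv_mem hk)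
      have h8 : k * n * k⁻¹ * n⁻¹ = k * (n * k⁻¹ * n⁻¹) := by group
      rw [h8]
      exact K.mul_mem hk h7
    have hc2 : k * n * k⁻¹ * n⁻¹ ∈ N₃ := by
      have h9 : k * n * k⁻¹ * n⁻¹ = (k * n * k⁻¹) * n⁻¹ := by group
      rw [h9]
      exact N₃.mul_mem (hN₃n.conj_mem n hn k) (N₃.inv_mem hn)
    have h10 : k * n * k⁻¹ * n⁻¹ ∈ K ⊓ N₃ := Subgroup.mem_inf.2 ⟨hc1, hc2⟩
    rw [hdisj, Subgroup.mem_bot] at h10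
    have h11 : k * n = (k * n * k⁻¹ * n⁻¹) * (n * k) := by group
    rw [h10, one_mul] at h11
    exact h11
  have hKle : K ≤ Subgroup.centralizer (N₃ : Set G) := by
    intro k hk
    rw [Subgroup.mem_centralizer_iff]
    intro n hn
    exact (hcomm k hk n hn).symm
  rw [centralizer_eq_bot hrf hinj h2 hN₃n hN₃bot] at hKle
  exact hKbot (le_bot_iff.1 hKle)

end Action
end NoFaith2T

open NoFaith2T in
/-- A countably infinite residually finite group which is virtually product-like (some
finite-index subgroup `G₀` contains two nontrivial normal subgroups intersecting trivially)
admits no faithful 2-transitive action on any set. -/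
theorem no_faithful_two_transitive_of_virtually_product_like
    (G : Type*) [Group G] [Countable G] [Infinite G]
    (hrf : ∀ g : G, g ≠ 1 →
      ∃ (H : Type) (_ : Group H) (_ : Finite H) (φ : G →* H), φ g ≠ 1)
    (hvpl : ∃ G₀ : Subgroup G, G₀.FiniteIndex ∧
      ∃ A B : Subgroup G₀, A ≠ ⊥ ∧ B ≠ ⊥ ∧ A.Normal ∧ B.Normal ∧ A ⊓ B = ⊥) :
    ∀ (Ω : Type*) (ρ : G →* Equiv.Perm Ω), Function.Injective ρ →
      ¬ ((∃ p : Fin 2 → Ω, Function.Injective p) ∧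
        ∀ a b : Fin 2 → Ω, Function.Injective a → Function.Injective b →
          ∃ g : G, ∀ i, ρ g (a i) = b i) := by
  classical
  intro Ω ρ hinj hact
  obtain ⟨-, htr⟩ := hact
  obtain ⟨G₀, hG₀fin, A, B, hAbot, hBbot, hAn, hBn, hABinf⟩ := hvpl
  -- Ω is infinite
  haveI hΩ : Infinite Ω := by
    by_contra hfin
    rw [not_infinite_iff_finite] at hfin
    haveI := hfin
    haveI : Finite (Equiv.Perm Ω) := inferInstance
    haveI : Finite G := Finite.of_injective ρ hinj
    exact not_finite G
  -- 2-transitivity in convenient form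
  have pair_inj : ∀ (x y : Ω), x ≠ y → Function.Injective ![x, y] := by
    intro x y hxy i j hij
    fin_cases i <;> fin_cases j <;> simp_all
  have h2 : ∀ a b c d : Ω, a ≠ b → c ≠ d → ∃ g : G, ρ g a = c ∧ ρ g b = d := by
    intro a b c d hab hcd
    obtain ⟨g, hg⟩ := htr ![a, b] ![c, d] (pair_inj a b hab) (pair_inj c d hcd)
    have hg0 := hg 0
    have hg1 := hg 1
    simp only [Matrix.cons_val_zero, Matrix.cons_val_one, Matrix.head_cons] at hg0 hg1
    exact ⟨g, hg0, hg1⟩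
  -- set up the finite-index normal subgroup and the two commuting subgroups
  haveI := hG₀fin
  set N : Subgroup G := G₀.normalCore with hNdef
  haveI hNfi : N.FiniteIndex := Subgroup.finiteIndex_normalCore G₀
  have hNn : N.Normal := Subgroup.normalCore_normal G₀
  have hNle : N ≤ G₀ := Subgroup.normalCore_le G₀
  have hNbot : N ≠ ⊥ := by
    intro h
    exact bot_not_finiteIndex (h ▸ hNfi)
  set Ag : Subgroup G := A.map G₀.subtype with hAgdef
  set Bg : Subgroup G := B.map G₀.subtype with hBgdef
  have hmapbot : ∀ C : Subgroup G₀, C.map G₀.subtype = ⊥ → C = ⊥ := by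
    intro C hC
    rw [Subgroup.eq_bot_iff_forall]
    intro x hx
    have : (x : G) ∈ C.map G₀.subtype := ⟨x, hx, rfl⟩
    rw [hC, Subgroup.mem_bot] at this
    exact Subtype.ext this
  have hAgbot : Ag ≠ ⊥ := fun h => hAbot (hmapbot A h)
  have hBgbot : Bg ≠ ⊥ := fun h => hBbot (hmapbot B h)
  have hAgle : Ag ≤ (G₀ : Subgroup G) := Subgroup.map_subtype_le A
  have hBgle : Bg ≤ (G₀ : Subgroup G) := Subgroup.map_subtype_le B
  have hAgconj : ∀ g ∈ G₀, ∀ x ∈ Ag, g * x * g⁻¹ ∈ Ag := by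
    intro g hg x hx
    obtain ⟨a, ha, rfl⟩ := hx
    exact ⟨(⟨g, hg⟩ : G₀) * a * (⟨g, hg⟩ : G₀)⁻¹, hAn.conj_mem a ha ⟨g, hg⟩, rfl⟩
  have hBgconj : ∀ g ∈ G₀, ∀ x ∈ Bg, g * x * g⁻¹ ∈ Bg := by
    intro g hg x hx
    obtain ⟨a, ha, rfl⟩ := hx
    exact ⟨(⟨g, hg⟩ : G₀) * a * (⟨g, hg⟩ : G₀)⁻¹, hBn.conj_mem a ha ⟨g, hg⟩, rfl⟩
  have hAgBg : Ag ⊓ Bg = ⊥ := by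
    rw [Subgroup.eq_bot_iff_forall]
    intro x hx
    obtain ⟨a, ha, haeq⟩ := (Subgroup.mem_inf.1 hx).1
    obtain ⟨b, hb, hbeq⟩ := (Subgroup.mem_inf.1 hx).2
    have hab : a = b := Subtype.ext (haeq.trans hbeq.symm)
    have h9 : a ∈ A ⊓ B := ⟨ha, hab ▸ hb⟩
    rw [hABinf, Subgroup.mem_bot] at h9
    rw [← haeq, h9]
    simp
  -- elements of Ag and Bg commute
  have hcommAB : ∀ x ∈ Ag, ∀ y ∈ Bg, x * y = y * x := by
    intro x hx y hy
    have hc1 : x * y * x⁻¹ * y⁻¹ ∈ Ag := by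
      have h5 : y * x⁻¹ * y⁻¹ ∈ Ag := hAgconj y (hBgle hy) x⁻¹ (Ag.inv_mem hx)
      have h6 : x * y * x⁻¹ * y⁻¹ = x * (y * x⁻¹ * y⁻¹) := by group
      rw [h6]; exact Ag.mul_mem hx h5
    have hc2 : x * y * x⁻¹ * y⁻¹ ∈ Bg := by
      have h5 : x * y * x⁻¹ ∈ Bg := hBgconj x (hAgle hx) y hy
      exact Bg.mul_mem h5 (Bg.inv_mem hy)
    have h7 : x * y * x⁻¹ * y⁻¹ ∈ Ag ⊓ Bg := Subgroup.mem_inf.2 ⟨hc1, hc2⟩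
    rw [hAgBg, Subgroup.mem_bot] at h7
    have h8 : x * y = (x * y * x⁻¹ * y⁻¹) * (y * x) := by group
    rw [h7, one_mul] at h8
    exact h8
  -- if a G₀-invariant nontrivial subgroup meets N trivially, contradiction
  have hcase : ∀ P : Subgroup G, P ≤ (G₀ : Subgroup G) → P ≠ ⊥ →
      (∀ g ∈ G₀, ∀ x ∈ P, g * x * g⁻¹ ∈ P) → P ⊓ N ≠ ⊥ := by
    intro P hle hbot hconj h0
    have hcen : P ≤ Subgroup.centralizer (N : Set G) := by
      intro x hx
      rw [Subgroup.mem_centralizer_iff]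
      intro n hn
      have hc1 : x * n * x⁻¹ * n⁻¹ ∈ P := by
        have h5 : n * x⁻¹ * n⁻¹ ∈ P := hconj n (hNle hn) x⁻¹ (P.inv_mem hx)
        have h6 : x * n * x⁻¹ * n⁻¹ = x * (n * x⁻¹ * n⁻¹) := by group
        rw [h6]; exact P.mul_mem hx h5
      have hc2 : x * n * x⁻¹ * n⁻¹ ∈ N := by
        have h9 : x * n * x⁻¹ * n⁻¹ = (x * n * x⁻¹) * n⁻¹ := by group
        rw [h9]; exact N.mul_mem (hNn.conj_mem n hn x) (N.inv_mem hn)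
      have h7 : x * n * x⁻¹ * n⁻¹ ∈ P ⊓ N := Subgroup.mem_inf.2 ⟨hc1, hc2⟩
      rw [h0, Subgroup.mem_bot] at h7
      have h8 : n * x = (x * n * x⁻¹ * n⁻¹)⁻¹ * (x * n) := by group
      rw [h7, inv_one, one_mul] at h8
      exact h8
    rw [centralizer_eq_bot hrf hinj h2 hNn hNbot] at hcen
    exact hbot (le_bot_iff.1 hcen)
  set X : Subgroup G := Ag ⊓ N with hXdef
  set Y : Subgroup G := Bg ⊓ N with hYdef
  have hXbot : X ≠ ⊥ := hcase Ag hAgle hAgbot hAgconj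
  have hYbot : Y ≠ ⊥ := hcase Bg hBgle hBgbot hBgconj
  have hXleN : X ≤ N := inf_le_right
  have hYleN : Y ≤ N := inf_le_right
  -- X and Y are invariant under conjugation by G₀ (hence by N)
  have hXG₀ : ∀ g ∈ G₀, cnj g X = X := by
    intro g hg
    ext x
    rw [mem_cnj]
    constructor
    · intro hx
      have h1 : x = g * (g⁻¹ * x * g) * g⁻¹ := by group
      rw [h1]
      exact Subgroup.mem_inf.2 ⟨hAgconj g hg _ (Subgroup.mem_inf.1 hx).1,
        hNn.conj_mem _ (Subgroup.mem_inf.1 hx).2 g⟩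
    · intro hx
      have h5 := hAgconj g⁻¹ (G₀.inv_mem hg) x (Subgroup.mem_inf.1 hx).1
      rw [inv_inv] at h5
      have h6 := hNn.conj_mem x (Subgroup.mem_inf.1 hx).2 g⁻¹
      rw [inv_inv] at h6
      exact Subgroup.mem_inf.2 ⟨h5, h6⟩
  have hYG₀ : ∀ g ∈ G₀, cnj g Y = Y := by
    intro g hg
    ext x
    rw [mem_cnj]
    constructor
    · intro hx
      have h1 : x = g * (g⁻¹ * x * g) * g⁻¹ := by group
      rw [h1]
      exact Subgroup.mem_inf.2 ⟨hBgconj g hg _ (Subgroup.mem_inf.1 hx).1,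
        hNn.conj_mem _ (Subgroup.mem_inf.1 hx).2 g⟩
    · intro hx
      have h5 := hBgconj g⁻¹ (G₀.inv_mem hg) x (Subgroup.mem_inf.1 hx).1
      rw [inv_inv] at h5
      have h6 := hNn.conj_mem x (Subgroup.mem_inf.1 hx).2 g⁻¹
      rw [inv_inv] at h6
      exact Subgroup.mem_inf.2 ⟨h5, h6⟩
  have hXN : ∀ n ∈ N, cnj n X = X := fun n hn => hXG₀ n (hNle hn)
  have hYN : ∀ n ∈ N, cnj n Y = Y := fun n hn => hYG₀ n (hNle hn)
  -- the finitely many conjugates of X and Y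
  set ImX : Set (Subgroup G) :=
    Set.range (fun c : G ⧸ N => cnj (Quotient.out c) X) with hImXdef
  set ImY : Set (Subgroup G) :=
    Set.range (fun c : G ⧸ N => cnj (Quotient.out c) Y) with hImYdef
  haveI : Finite (G ⧸ N) := inferInstance
  have hImXfin : ImX.Finite := Set.finite_range _
  have hImYfin : ImY.Finite := Set.finite_range _
  have hconj_mem_aux : ∀ (Z : Subgroup G), (∀ n ∈ N, cnj n Z = Z) →
      ∀ g : G, cnj (Quotient.out (QuotientGroup.mk g : G ⧸ N)) Z = cnj g Z := by
    intro Z hZ g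
    set b := Quotient.out (QuotientGroup.mk g : G ⧸ N) with hb
    have hmk : (QuotientGroup.mk g : G ⧸ N) = QuotientGroup.mk b := by
      rw [hb, QuotientGroup.out_eq']
    have hgb : g⁻¹ * b ∈ N := QuotientGroup.eq.1 hmk
    have hbeq : b = g * (g⁻¹ * b) := by group
    rw [hbeq, ← cnj_cnj, hZ _ hgb]
  have hImX_mem : ∀ g : G, cnj g X ∈ ImX := by
    intro g
    exact ⟨QuotientGroup.mk g, hconj_mem_aux X hXN g⟩
  have hImY_mem : ∀ g : G, cnj g Y ∈ ImY := by
    intro g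
    exact ⟨QuotientGroup.mk g, hconj_mem_aux Y hYN g⟩
  have hImXY_shape : ∀ Z ∈ ImX ∪ ImY, ∃ g : G, Z = cnj g X ∨ Z = cnj g Y := by
    rintro Z (⟨c, rfl⟩ | ⟨c, rfl⟩)
    · exact ⟨Quotient.out c, Or.inl rfl⟩
    · exact ⟨Quotient.out c, Or.inr rfl⟩
  have hImXY_leN : ∀ Z ∈ ImX ∪ ImY, Z ≤ N := by
    intro Z hZ
    obtain ⟨g, hg | hg⟩ := hImXY_shape Z hZ <;> subst hg
    · intro x hx
      rw [mem_cnj] at hx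
      have := hXleN hx
      have h1 : x = g * (g⁻¹ * x * g) * g⁻¹ := by group
      rw [h1]
      exact hNn.conj_mem _ this g
    · intro x hx
      rw [mem_cnj] at hx
      have := hYleN hx
      have h1 : x = g * (g⁻¹ * x * g) * g⁻¹ := by group
      rw [h1]
      exact hNn.conj_mem _ this g
  have hcnjN_cnj : ∀ (Z : Subgroup G), (∀ n ∈ N, cnj n Z = Z) →
      ∀ (g : G), ∀ n ∈ N, cnj n (cnj g Z) = cnj g Z := by
    intro Z hZ g n hn
    rw [cnj_cnj]
    have h1 : n * g = g * (g⁻¹ * n * g) := by group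
    have h2 : g⁻¹ * n * g ∈ N := by
      have := hNn.conj_mem n hn g⁻¹
      rwa [inv_inv] at this
    rw [h1, ← cnj_cnj, hZ _ h2]
  have hImXY_cnjN : ∀ Z ∈ ImX ∪ ImY, ∀ n ∈ N, cnj n Z = Z := by
    intro Z hZ
    obtain ⟨g, hg | hg⟩ := hImXY_shape Z hZ <;> subst hg
    · exact hcnjN_cnj X hXN g
    · exact hcnjN_cnj Y hYN g
  have hImXY_cnj : ∀ Z ∈ ImX ∪ ImY, ∀ g : G, cnj g Z ∈ ImX ∪ ImY := by
    intro Z hZ g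
    obtain ⟨h, hh | hh⟩ := hImXY_shape Z hZ <;> subst hh <;> rw [cnj_cnj]
    · exact Or.inl (hImX_mem (g * h))
    · exact Or.inr (hImY_mem (g * h))
  -- the finite family of nontrivial intersections of conjugates
  set C : Set (Subgroup G) := {P | P ≠ ⊥ ∧ ∃ s : Finset (Subgroup G),
    s.Nonempty ∧ ↑s ⊆ ImX ∪ ImY ∧ P = s.inf id} with hCdef
  have hCfin : C.Finite := by
    have h1 : {s : Finset (Subgroup G) | ↑s ⊆ ImX ∪ ImY}.Finite := by
      apply Set.Finite.of_finite_image (f := fun s : Finset (Subgroup G) => (↑s : Set (Subgroup G)))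
      · exact Set.Finite.subset (hImXfin.union hImYfin).finite_subsets
          (by rintro t ⟨s, hs, rfl⟩; exact hs)
      · exact Finset.coe_injective.injOn
    apply Set.Finite.subset (h1.image (fun s => s.inf id))
    rintro P ⟨hPbot, s, hsne, hssub, rfl⟩
    exact ⟨s, hssub, rfl⟩
  have hXC : X ∈ C := by
    refine ⟨hXbot, {X}, Finset.singleton_nonempty X, ?_, by simp⟩
    intro Z hZ
    rw [Finset.coe_singleton, Set.mem_singleton_iff] at hZ
    subst hZ
    have := hImX_mem 1
    rw [cnj_one] at this
    exact Or.inl this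
  -- basic properties of members of C
  have hC_leN : ∀ P ∈ C, P ≤ N := by
    rintro P ⟨hPbot, s, hsne, hssub, rfl⟩
    obtain ⟨Z, hZ⟩ := hsne
    exact le_trans (Finset.inf_le hZ) (hImXY_leN Z (hssub hZ))
  have hC_cnjN : ∀ P ∈ C, ∀ n ∈ N, cnj n P = P := by
    rintro P ⟨hPbot, s, hsne, hssub, rfl⟩ n hn
    rw [cnj_finsetInf]
    exact Finset.inf_congr rfl (fun Z hZ => hImXY_cnjN Z (hssub hZ) n hn)
  have hC_cnj : ∀ P ∈ C, ∀ g : G, cnj g P ∈ C := by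
    rintro P ⟨hPbot, s, hsne, hssub, rfl⟩ g
    refine ⟨by rwa [ne_eq, cnj_eq_bot_iff], s.image (cnj g), hsne.image _, ?_, ?_⟩
    · intro Z hZ
      rw [Finset.coe_image] at hZ
      obtain ⟨W, hW, rfl⟩ := hZ
      exact hImXY_cnj W (hssub hW) g
    · rw [cnj_finsetInf, Finset.inf_image]
      rfl
  have hC_inf : ∀ P ∈ C, ∀ Q ∈ C, P ⊓ Q ≠ ⊥ → P ⊓ Q ∈ C := by
    rintro P ⟨hPbot, s, hsne, hssub, rfl⟩ Q ⟨hQbot, t, htne, htsub, rfl⟩ hne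
    refine ⟨hne, s ∪ t, ?_, ?_, ?_⟩
    · obtain ⟨Z, hZ⟩ := hsne
      exact ⟨Z, Finset.mem_union_left t hZ⟩
    · intro Z hZ
      rw [Finset.coe_union] at hZ
      rcases hZ with hZ | hZ
      · exact hssub hZ
      · exact htsub hZ
    · rw [Finset.inf_union]
  -- pick a minimal member K of C
  obtain ⟨K, hKC, hKmin⟩ : ∃ K ∈ C, ∀ P ∈ C, id P ≤ id K → id K = id P := by
    obtain ⟨K, hK⟩ := hCfin.exists_minimal ⟨X, hXC⟩
    exact ⟨K, hK.1, fun P hP hle => le_antisymm (hK.2 hP hle) hle⟩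
  obtain ⟨hKbot, s, hsne, hssub, hsinf⟩ := hKC
  have hKC' : K ∈ C := ⟨hKbot, s, hsne, hssub, hsinf⟩
  have hKleN : K ≤ N := hC_leN K hKC'
  have hKcnjN : ∀ n ∈ N, cnj n K = K := hC_cnjN K hKC'
  -- dichotomy for conjugates of K
  have hdich : ∀ g : G, cnj g K = K ∨ K ⊓ cnj g K = ⊥ := by
    intro g
    by_cases hb : K ⊓ cnj g K = ⊥
    · exact Or.inr hb
    · left
      have hmem : K ⊓ cnj g K ∈ C := hC_inf K hKC' (cnj g K) (hC_cnj K hKC' g) hb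
      have h1 : K ⊓ cnj g K = K := (hKmin _ hmem inf_le_left).symm
      have h2' : K ≤ cnj g K := by
        conv_lhs => rw [← h1]
        exact inf_le_right
      have h3 : cnj g⁻¹ K ≤ K := by
        have := cnj_mono g⁻¹ h2'
        rwa [cnj_cnj, inv_mul_cancel, cnj_one] at this
      have h4 : cnj g⁻¹ K = K := (hKmin _ (hC_cnj K hKC' g⁻¹) h3).symm
      calc cnj g K = cnj g (cnj g⁻¹ K) := by rw [h4]
        _ = K := by rw [cnj_cnj, mul_inv_cancel, cnj_one]
  have hKcnjN' : ∀ (g : G), ∀ n ∈ N, cnj n (cnj g K) = cnj g K :=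
    fun g => hcnjN_cnj K hKcnjN g
  have hcnjleN : ∀ g : G, cnj g K ≤ N := by
    intro g
    have := cnj_mono g hKleN
    rwa [cnj_eq_of_normal hNn g] at this
  -- distinct conjugates of K commute elementwise
  have hpair : ∀ g : G, cnj g K ≠ K → ∀ a ∈ K, ∀ b ∈ cnj g K, a * b = b * a := by
    intro g hg a ha b hb
    have haN : a ∈ N := hKleN ha
    have hbN : b ∈ N := hcnjleN g hb
    have hc1 : a * b * a⁻¹ * b⁻¹ ∈ K := by
      have h6 := conj_mem_cnj (g := b) (K.inv_mem ha)
      rw [hKcnjN b hbN] at h6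
      have h7 : a * b * a⁻¹ * b⁻¹ = a * (b * a⁻¹ * b⁻¹) := by group
      rw [h7]
      exact K.mul_mem ha h6
    have hc2 : a * b * a⁻¹ * b⁻¹ ∈ cnj g K := by
      have h6 := conj_mem_cnj (g := a) hb
      rw [hKcnjN' g a haN] at h6
      exact (cnj g K).mul_mem h6 ((cnj g K).inv_mem hb)
    have h10 : a * b * a⁻¹ * b⁻¹ ∈ K ⊓ cnj g K := Subgroup.mem_inf.2 ⟨hc1, hc2⟩
    rw [(hdich g).resolve_left hg, Subgroup.mem_bot] at h10
    have h11 : a * b = (a * b * a⁻¹ * b⁻¹) * (b * a) := by group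
    rw [h10, one_mul] at h11
    exact h11
  by_cases hall : ∀ g : G, cnj g K = K
  · -- K is a nontrivial normal subgroup with nontrivial centralizer
    have hKnormal : K.Normal := by
      constructor
      intro k hk g
      have h6 := conj_mem_cnj (g := g) hk
      rwa [hall g] at h6
    obtain ⟨Z₀, hZ₀s⟩ := hsne
    have hKleZ : K ≤ Z₀ := by
      rw [hsinf]
      exact Finset.inf_le hZ₀s
    obtain ⟨g, hZcase⟩ := hImXY_shape Z₀ (hssub hZ₀s)
    rcases hZcase with h | h
    · have hWbot : cnj g Y ≠ ⊥ := by rw [ne_eq, cnj_eq_bot_iff]; exact hYbot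
      have hWle : cnj g Y ≤ Subgroup.centralizer (K : Set G) := by
        intro w hw
        rw [Subgroup.mem_centralizer_iff]
        intro k hk
        have hkX : g⁻¹ * k * g ∈ X := by
          have h5 := hKleZ hk
          rw [h] at h5
          rwa [mem_cnj] at h5
        have hwY : g⁻¹ * w * g ∈ Y := by rwa [mem_cnj] at hw
        have hcm := hcommAB _ (Subgroup.mem_inf.1 hkX).1 _ (Subgroup.mem_inf.1 hwY).1
        have h8 : k * w = g * ((g⁻¹ * k * g) * (g⁻¹ * w * g)) * g⁻¹ := by group
        have h9 : w * k = g * ((g⁻¹ * w * g) * (g⁻¹ * k * g)) * g⁻¹ := by group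
        rw [h8, h9, hcm]
      rw [centralizer_eq_bot hrf hinj h2 hKnormal hKbot] at hWle
      exact hWbot (le_bot_iff.1 hWle)
    · have hWbot : cnj g X ≠ ⊥ := by rw [ne_eq, cnj_eq_bot_iff]; exact hXbot
      have hWle : cnj g X ≤ Subgroup.centralizer (K : Set G) := by
        intro w hw
        rw [Subgroup.mem_centralizer_iff]
        intro k hk
        have hkY : g⁻¹ * k * g ∈ Y := by
          have h5 := hKleZ hk
          rw [h] at h5
          rwa [mem_cnj] at h5
        have hwX : g⁻¹ * w * g ∈ X := by rwa [mem_cnj] at hw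
        have hcm := hcommAB _ (Subgroup.mem_inf.1 hwX).1 _ (Subgroup.mem_inf.1 hkY).1
        have h8 : k * w = g * ((g⁻¹ * k * g) * (g⁻¹ * w * g)) * g⁻¹ := by group
        have h9 : w * k = g * ((g⁻¹ * w * g) * (g⁻¹ * k * g)) * g⁻¹ := by group
        rw [h8, h9, hcm]
      rw [centralizer_eq_bot hrf hinj h2 hKnormal hKbot] at hWle
      exact hWbot (le_bot_iff.1 hWle)
  · push_neg at hall
    obtain ⟨g₀, hg₀⟩ := hall
    -- normalizers of conjugates of K contain N, hence have finite index
    have hnorm : ∀ g : G, N ≤ (Subgroup.normalizer ((cnj g K : Subgroup G) : Set G)) := by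
      intro g n hn
      rw [Subgroup.mem_normalizer_iff]
      intro h
      constructor
      · intro hh
        have h6 := conj_mem_cnj (g := n) hh
        rwa [hKcnjN' g n hn] at h6
      · intro hh
        have h6 := conj_mem_cnj (g := n⁻¹) hh
        rw [hKcnjN' g n⁻¹ (N.inv_mem hn)] at h6
        have heq : n⁻¹ * (n * h * n⁻¹) * n⁻¹⁻¹ = h := by group
        rwa [heq] at h6
    have hnormfin : ∀ g : G, (Subgroup.normalizer ((cnj g K : Subgroup G) : Set G)).FiniteIndex := fun g =>
      Subgroup.finiteIndex_of_le (hnorm g)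
    by_cases hsrK : Sr ρ K
    · have hfinK : (Subgroup.normalizer (K : Set G)).FiniteIndex := by
        have := hnormfin 1
        rwa [cnj_one] at this
      exact lemS hrf hinj h2 hKbot hfinK hsrK
    · -- some nontrivial element of K fixes a point
      have hsrK' : ¬ ∀ k ∈ K, k ≠ 1 → ∀ ω : Ω, ρ k ω ≠ ω := hsrK
      push_neg at hsrK'
      obtain ⟨x, hxK, hx1, ω₀, hxfix⟩ := hsrK'
      obtain ⟨p, hp⟩ := exists_moved hinj hx1
      -- covering by conjugates of K
      have hcov2 : ∀ (u w : Ω), w ≠ u → ∃ g : G, ∃ k' ∈ cnj g K, ρ k' u = w := by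
        intro u w hw
        obtain ⟨h, hh1, hh2⟩ := h2 p (ρ x p) u w (Ne.symm hp) (Ne.symm hw)
        refine ⟨h, h * x * h⁻¹, conj_mem_cnj hxK, ?_⟩
        have h5 : ρ h⁻¹ u = p := by
          rw [← hh1, ← apply_mul, inv_mul_cancel, map_one]; rfl
        have h6 : h * x * h⁻¹ = (h * x) * h⁻¹ := by group
        rw [h6, apply_mul, apply_mul, h5, hh2]
      -- the support of x is contained in each K-orbit of a fixed point of x
      have hsupp : ∀ u : Ω, ρ x u = u → ∀ w : Ω, (¬ ∃ k ∈ K, ρ k u = w) → ρ x w = w := by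
        intro u hu w hnw
        by_cases hw : w = u
        · rw [hw]; exact hu
        · obtain ⟨g, k', hk', hk'u⟩ := hcov2 u w hw
          by_cases hgK : cnj g K = K
          · exact absurd ⟨k', hgK ▸ hk', hk'u⟩ hnw
          · have hcm := hpair g hgK x hxK k' hk'
            rw [← hk'u, ← apply_mul, hcm, apply_mul, hu]
      by_cases htriv : ∀ v : Ω, ∃ k ∈ K, ρ k ω₀ = v
      · -- K is transitive; then the distinct conjugate cnj g₀ K is semiregular
        have hLbot : cnj g₀ K ≠ ⊥ := by rw [ne_eq, cnj_eq_bot_iff]; exact hKbot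
        have hKtrans : ∀ u v : Ω, ∃ k ∈ K, ρ k u = v := by
          intro u v
          obtain ⟨k₁, hk₁, hk₁u⟩ := htriv u
          obtain ⟨k₂, hk₂, hk₂v⟩ := htriv v
          refine ⟨k₂ * k₁⁻¹, K.mul_mem hk₂ (K.inv_mem hk₁), ?_⟩
          have h5 : ρ k₁⁻¹ u = ω₀ := by
            rw [← hk₁u, ← apply_mul, inv_mul_cancel, map_one]; rfl
          rw [apply_mul, h5, hk₂v]
        have hLsr : Sr ρ (cnj g₀ K) := by
          intro c hcL hc1 ω' hfix
          apply hc1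
          apply hinj
          rw [map_one]
          apply Equiv.ext
          intro v
          obtain ⟨k, hkK, hkv⟩ := hKtrans ω' v
          have hcm := hpair g₀ hg₀ k hkK c hcL
          calc ρ c v = ρ c (ρ k ω') := by rw [hkv]
            _ = ρ (c * k) ω' := (apply_mul c k ω').symm
            _ = ρ (k * c) ω' := by rw [← hcm]
            _ = ρ k (ρ c ω') := apply_mul k c ω'
            _ = (1 : Equiv.Perm Ω) v := by rw [hfix, hkv]; rfl
        exact lemS hrf hinj h2 hLbot (hnormfin g₀) hLsr
      · push_neg at htriv
        obtain ⟨ω₁, hω₁⟩ := htriv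
        have hnot₁ : ¬ ∃ k ∈ K, ρ k ω₀ = ω₁ := by
          rintro ⟨k, hk, he⟩
          exact hω₁ k hk he
        have hfix₁ : ρ x ω₁ = ω₁ := hsupp ω₀ hxfix ω₁ hnot₁
        have hallfix : ∀ w : Ω, ρ x w = w := by
          intro w
          by_cases hw : ∃ k ∈ K, ρ k ω₀ = w
          · apply hsupp ω₁ hfix₁ w
            rintro ⟨k, hkK, hkw⟩
            obtain ⟨k', hk'K, hk'w⟩ := hw
            apply hω₁ (k⁻¹ * k') (K.mul_mem (K.inv_mem hkK) hk'K)
            rw [apply_mul, hk'w, ← hkw, ← apply_mul, inv_mul_cancel, map_one]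
            rfl
          · exact hsupp ω₀ hxfix w hw
        apply hx1
        apply hinj
        rw [map_one]
        exact Equiv.ext (fun w => by rw [hallfix w]; rfl)
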